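/- Let R be a 2-torsion free commutative ring with identity and n ≥ 1. Then every generalized Jordan derivation of the full matrix algebra Mₙ(R) is a generalized derivation. That is, if Ξ : Mₙ(R) → Mₙ(R) is R-linear and there exists an R-linear Jordan derivation τ with Ξ(a²) = Ξ(a)a + aτ(a) for all a, then there exists a derivation d : Mₙ(R) → Mₙ(R) with Ξ(ab) = Ξ(a)b + a d(b) for all a, b ∈ Mₙ(R). -/

import Mathlib

namespace Stmt7Aux
open Matrix

variable {R : Type*} [CommRing R] {n : ℕ}
variable (σ : Matrix (Fin n) (Fin n) R →ₗ[R] Matrix (Fin n) (Fin n) R)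

set_option linter.unusedSectionVars false

theorem myP2 (hσ : ∀ a, σ (a * a) = σ a * a + a * σ a) (a b : Matrix (Fin n) (Fin n) R) :
    σ (a * b + b * a) = σ a * b + a * σ b + σ b * a + b * σ a := by
  have h := hσ (a + b)
  have e : (a + b) * (a + b) = a * a + (a * b + b * a) + b * b := by noncomm_ring
  rw [e, map_add, map_add, hσ a, hσ b, map_add, map_add] at h
  rw [map_add]
  have hM : σ (a * b) + σ (b * a)
      = (σ a + σ b) * (a + b) + (a + b) * (σ a + σ b)
        - (σ a * a + a * σ a) - (σ b * b + b * σ b) := by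
    rw [← h]; abel
  rw [hM]; noncomm_ring

theorem myP3 (h2 : ∀ M : Matrix (Fin n) (Fin n) R, M + M = 0 → M = 0)
    (hσ : ∀ a, σ (a * a) = σ a * a + a * σ a) (a b : Matrix (Fin n) (Fin n) R) :
    σ (a * b * a) = σ a * b * a + a * σ b * a + a * b * σ a := by
  have hX := myP2 σ hσ a (a * b + b * a)
  have hY := myP2 σ hσ (a * a) b
  rw [hσ a, map_add] at hY
  rw [myP2 σ hσ a b] at hX
  have e : a * (a * b + b * a) + (a * b + b * a) * a
      = (a * a * b + b * (a * a)) + (a * b * a + a * b * a) := by noncomm_ring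
  rw [e, map_add, map_add, map_add] at hX
  have h5 : σ (a * b * a) + σ (a * b * a)
      = σ a * (a * b + b * a) + a * (σ a * b + a * σ b + σ b * a + b * σ a)
        + (σ a * b + a * σ b + σ b * a + b * σ a) * a + (a * b + b * a) * σ a
        - (σ (a * a * b) + σ (b * (a * a))) := by
    rw [← hX]; abel
  rw [hY] at h5
  have h4 : σ (a * b * a) + σ (a * b * a)
      = (σ a * b * a + a * σ b * a + a * b * σ a) + (σ a * b * a + a * σ b * a + a * b * σ a) := by
    rw [h5]; noncomm_ring
  have h6 : σ (a * b * a) - (σ a * b * a + a * σ b * a + a * b * σ a) = 0 := by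
    apply h2
    rw [sub_add_sub_comm, h4, sub_self]
  exact sub_eq_zero.mp h6

theorem myP3' (h2 : ∀ M : Matrix (Fin n) (Fin n) R, M + M = 0 → M = 0)
    (hσ : ∀ a, σ (a * a) = σ a * a + a * σ a) (a b c : Matrix (Fin n) (Fin n) R) :
    σ (a * b * c + c * b * a) = σ a * b * c + a * σ b * c + a * b * σ c
      + σ c * b * a + c * σ b * a + c * b * σ a := by
  have h := myP3 σ h2 hσ (a + c) b
  have e : (a + c) * b * (a + c) = (a * b * a) + (a * b * c + c * b * a) + (c * b * c) := by
    noncomm_ring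
  rw [e, map_add, map_add, map_add, myP3 σ h2 hσ a b, myP3 σ h2 hσ c b] at h
  rw [map_add]
  have hM : σ (a * b * c) + σ (c * b * a)
      = σ (a + c) * b * (a + c) + (a + c) * σ b * (a + c) + (a + c) * b * σ (a + c)
        - (σ a * b * a + a * σ b * a + a * b * σ a) - (σ c * b * c + c * σ b * c + c * b * σ c) := by
    rw [← h]; abel
  rw [hM, map_add]; noncomm_ring

section UnitLemmas
variable (hP3 : ∀ a b, σ (a * b * a) = σ a * b * a + a * σ b * a + a * b * σ a)
variable (hP3' : ∀ a b c, σ (a * b * c + c * b * a) = σ a * b * c + a * σ b * c + a * b * σ c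
      + σ c * b * a + c * σ b * a + c * b * σ a)
variable (hE : ∀ k : Fin n, σ (Matrix.single k k (1:R)) = 0)

include hP3 hE in
theorem jstar (x : Matrix (Fin n) (Fin n) R) (k : Fin n) :
    σ (Matrix.single k k (1:R) * x * Matrix.single k k (1:R))
      = Matrix.single k k (1:R) * σ x * Matrix.single k k (1:R) := by
  rw [hP3, hE]; simp

include hP3' hE in
theorem jstarstar (x : Matrix (Fin n) (Fin n) R) (k m : Fin n) :
    σ (Matrix.single k k (1:R) * x * Matrix.single m m (1:R)
        + Matrix.single m m (1:R) * x * Matrix.single k k (1:R))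
      = Matrix.single k k (1:R) * σ x * Matrix.single m m (1:R)
        + Matrix.single m m (1:R) * σ x * Matrix.single k k (1:R) := by
  rw [hP3', hE, hE]; simp

include hP3 hE in
theorem Ldiag {i j : Fin n} (hij : i ≠ j) (k : Fin n) :
    σ (Matrix.single i j (1:R)) k k = 0 := by
  have h := jstar σ hP3 hE (Matrix.single i j (1:R)) k
  have hz : Matrix.single k k (1:R) * Matrix.single i j (1:R) * Matrix.single k k (1:R)
      = (0 : Matrix (Fin n) (Fin n) R) := by
    by_cases hk : k = i
    · subst hk
      rw [Matrix.single_mul_single_same, Matrix.single_mul_single_of_ne _ _ _ _ (fun h => hij h.symm)]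
    · rw [Matrix.single_mul_single_of_ne _ _ _ _ hk, zero_mul]
  rw [hz, map_zero] at h
  have h2 := congrFun (congrFun h k) k
  simpa using h2.symm

include hP3' hE in
theorem Loff {i j : Fin n} {k m : Fin n} (hkm : k ≠ m)
    (h1 : ¬(k = i ∧ m = j)) (hsw : ¬(k = j ∧ m = i)) :
    σ (Matrix.single i j (1:R)) k m = 0 := by
  have h := jstarstar σ hP3' hE (Matrix.single i j (1:R)) k m
  have hz1 : Matrix.single k k (1:R) * Matrix.single i j (1:R) * Matrix.single m m (1:R)
      = (0 : Matrix (Fin n) (Fin n) R) := by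
    by_cases hk : k = i
    · subst hk
      have hjm : j ≠ m := fun hh => h1 ⟨rfl, hh.symm⟩
      rw [Matrix.single_mul_single_same, Matrix.single_mul_single_of_ne _ _ _ _ hjm]
    · rw [Matrix.single_mul_single_of_ne _ _ _ _ hk, zero_mul]
  have hz2 : Matrix.single m m (1:R) * Matrix.single i j (1:R) * Matrix.single k k (1:R)
      = (0 : Matrix (Fin n) (Fin n) R) := by
    by_cases hm : m = i
    · subst hm
      have hjk : j ≠ k := fun hh => hsw ⟨hh.symm, rfl⟩
      rw [Matrix.single_mul_single_same, Matrix.single_mul_single_of_ne _ _ _ _ hjk]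
    · rw [Matrix.single_mul_single_of_ne _ _ _ _ hm, zero_mul]
  rw [hz1, hz2, add_zero, map_zero] at h
  have he := congrFun (congrFun h.symm k) m
  simpa [hkm, Ne.symm hkm] using he

include hP3 hE in
theorem Lji {i j : Fin n} (hij : i ≠ j) :
    σ (Matrix.single i j (1:R)) j i = 0 := by
  have h := hP3 (Matrix.single i j (1:R)) (Matrix.single j i (1:R))
  rw [show Matrix.single i j (1:R) * Matrix.single j i (1:R) * Matrix.single i j (1:R)
      = Matrix.single i j (1:R) from by
    rw [Matrix.single_mul_single_same, Matrix.single_mul_single_same]; norm_num] at h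
  have he := congrFun (congrFun h j) i
  simpa [Matrix.add_apply, Matrix.single_mul_single_same, Matrix.mul_single_apply_of_ne,
    Matrix.single_mul_apply_of_ne, hij, Ne.symm hij] using he

include hP3 hP3' hE in
theorem jRep (i j : Fin n) :
    σ (Matrix.single i j (1:R)) = Matrix.single i j (σ (Matrix.single i j (1:R)) i j) := by
  by_cases hij : i = j
  · subst hij; rw [hE]; simp
  · ext a b
    by_cases hab : a = i ∧ b = j
    · obtain ⟨rfl, rfl⟩ := hab; simp
    · have hne : ¬(i = a ∧ j = b) := fun hh => hab ⟨hh.1.symm, hh.2.symm⟩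
      rw [Matrix.single_apply_of_ne _ _ _ _ _ hne]
      by_cases hd : a = b
      · subst hd; exact Ldiag σ hP3 hE hij a
      · by_cases hji : a = j ∧ b = i
        · obtain ⟨rfl, rfl⟩ := hji; exact Lji σ hP3 hE hij
        · exact Loff σ hP3' hE hd hab hji

include hP3 hP3' hE in
theorem jchasles (i j l : Fin n) :
    σ (Matrix.single i l (1:R)) i l
      = σ (Matrix.single i j (1:R)) i j + σ (Matrix.single j l (1:R)) j l := by
  by_cases hjl : j = l
  · subst hjl
    have : σ (Matrix.single j j (1:R)) j j = 0 := by rw [hE]; simp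
    rw [this, add_zero]
  · have h := hP3' (Matrix.single i j (1:R)) (Matrix.single j j (1:R))
      (Matrix.single j l (1:R))
    rw [hE j] at h
    rw [show Matrix.single i j (1:R) * Matrix.single j j (1:R) * Matrix.single j l (1:R)
        = Matrix.single i l (1:R) from by
      rw [Matrix.single_mul_single_same, Matrix.single_mul_single_same]; norm_num] at h
    rw [show Matrix.single j l (1:R) * Matrix.single j j (1:R) * Matrix.single i j (1:R)
        = 0 from by
      rw [Matrix.single_mul_single_of_ne _ _ _ _ (fun hh => hjl hh.symm), zero_mul]] at h
    rw [jRep σ hP3 hP3' hE i j, jRep σ hP3 hP3' hE j l] at h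
    rw [add_zero] at h
    have hz3 : (Matrix.single j l (σ (Matrix.single j l (1:R)) j l)) * Matrix.single j j (1:R)
        = (0 : Matrix (Fin n) (Fin n) R) :=
      Matrix.single_mul_single_of_ne _ _ _ _ (fun hh => hjl hh.symm) _
    have hz4 : (Matrix.single j l (1:R)) * Matrix.single j j (1:R)
        = (0 : Matrix (Fin n) (Fin n) R) :=
      Matrix.single_mul_single_of_ne _ _ _ _ (fun hh => hjl hh.symm) _
    rw [hz3, hz4] at h
    have he := congrFun (congrFun h i) l
    simp only [Matrix.single_mul_single_same, mul_zero, zero_mul, mul_one, one_mul, add_zero, zero_add,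
      Matrix.add_apply, Matrix.zero_apply, Matrix.single_apply_same] at he
    exact he

include hP3 hP3' hE in
theorem junit (i j k l : Fin n) :
    σ (Matrix.single i j (1:R) * Matrix.single k l (1:R))
      = σ (Matrix.single i j (1:R)) * Matrix.single k l (1:R)
        + Matrix.single i j (1:R) * σ (Matrix.single k l (1:R)) := by
  by_cases hjk : j = k
  · subst hjk
    rw [Matrix.single_mul_single_same, one_mul]
    conv_lhs => rw [jRep σ hP3 hP3' hE i l]
    conv_rhs => rw [jRep σ hP3 hP3' hE i j, jRep σ hP3 hP3' hE j l]
    rw [Matrix.single_mul_single_same, Matrix.single_mul_single_same, mul_one, one_mul,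
      ← Matrix.single_add, jchasles σ hP3 hP3' hE i j l]
  · rw [Matrix.single_mul_single_of_ne _ _ _ _ hjk, map_zero]
    conv_rhs => rw [jRep σ hP3 hP3' hE i j, jRep σ hP3 hP3' hE k l]
    rw [Matrix.single_mul_single_of_ne _ _ _ _ hjk, Matrix.single_mul_single_of_ne _ _ _ _ hjk, add_zero]

include hP3 hP3' hE in
theorem jder (a b : Matrix (Fin n) (Fin n) R) :
    σ (a * b) = σ a * b + a * σ b := by
  let B : Matrix (Fin n) (Fin n) R →ₗ[R] Matrix (Fin n) (Fin n) R →ₗ[R] Matrix (Fin n) (Fin n) R :=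
    LinearMap.mk₂ R (fun a b => σ (a * b) - σ a * b - a * σ b)
      (by intros m₁ m₂ m; simp [add_mul, map_add]; abel)
      (by intros c m₁ m₂; simp [smul_mul_assoc]; module)
      (by intros m m₁ m₂; simp [mul_add, map_add]; abel)
      (by intros c m₁ m₂; simp [mul_smul_comm]; module)
  have hB : B = 0 := by
    apply (Matrix.stdBasis R (Fin n) (Fin n)).ext
    rintro ⟨i, j⟩
    apply (Matrix.stdBasis R (Fin n) (Fin n)).ext
    rintro ⟨k, l⟩
    simp only [Matrix.stdBasis_eq_single, LinearMap.zero_apply, LinearMap.mk₂_apply, B]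
    rw [junit σ hP3 hP3' hE i j k l]
    abel
  have := congrFun (congrArg DFunLike.coe (congrFun (congrArg DFunLike.coe hB) a)) b
  simp only [LinearMap.mk₂_apply, LinearMap.zero_apply, B] at this
  rw [sub_sub, sub_eq_zero] at this
  exact this

end UnitLemmas

theorem Lkey (hτ : ∀ a, σ (a * a) = σ a * a + a * σ a) (i b : Fin n) :
    σ (Matrix.single b b (1:R)) i b + σ (Matrix.single i i (1:R)) i b = 0 := by
  by_cases hib : i = b
  · subst hib
    have h := hτ (Matrix.single i i (1:R))
    rw [Matrix.single_mul_single_same, one_mul] at h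
    have he := congrFun (congrFun h i) i
    rw [Matrix.add_apply, Matrix.mul_single_apply_same,
      Matrix.single_mul_apply_same] at he
    linear_combination (-(2:R)) * he
  · have h := myP2 σ hτ (Matrix.single i i (1:R)) (Matrix.single b b (1:R))
    rw [Matrix.single_mul_single_of_ne _ _ _ _ hib, Matrix.single_mul_single_of_ne _ _ _ _ (Ne.symm hib),
      add_zero, map_zero] at h
    have he := congrFun (congrFun h i) b
    simp only [Matrix.zero_apply, Matrix.add_apply, Matrix.mul_single_apply_same,
      Matrix.single_mul_apply_same, mul_one, one_mul] at he
    rw [Matrix.mul_single_apply_of_ne _ _ _ _ _ (fun hh => hib hh.symm),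
      Matrix.single_mul_apply_of_ne _ _ _ _ _ hib] at he
    linear_combination -he

theorem hs_entry (hτ : ∀ a, σ (a * a) = σ a * a + a * σ a) (i b : Fin n) :
    (∑ k, σ (Matrix.single k k (1:R)) * Matrix.single k k (1:R)) i b
      = - σ (Matrix.single i i (1:R)) i b := by
  rw [Matrix.sum_apply]
  rw [Finset.sum_eq_single b]
  · rw [Matrix.mul_single_apply_same, mul_one]
    linear_combination Lkey σ hτ i b
  · intro k _ hk
    rw [Matrix.mul_single_apply_of_ne _ _ _ _ _ (Ne.symm hk)]
  · intro hmem; exact absurd (Finset.mem_univ b) hmem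

theorem sigmaE (hτ : ∀ a, σ (a * a) = σ a * a + a * σ a) (i : Fin n) :
    σ (Matrix.single i i (1:R))
      - ((∑ k, σ (Matrix.single k k (1:R)) * Matrix.single k k (1:R)) * Matrix.single i i (1:R)
        - Matrix.single i i (1:R) * (∑ k, σ (Matrix.single k k (1:R)) * Matrix.single k k (1:R)))
      = 0 := by
  have h1 : (∑ k, σ (Matrix.single k k (1:R)) * Matrix.single k k (1:R)) * Matrix.single i i (1:R)
      = σ (Matrix.single i i (1:R)) * Matrix.single i i (1:R) := by
    rw [Finset.sum_mul]
    rw [Finset.sum_eq_single i]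
    · rw [mul_assoc, Matrix.single_mul_single_same, one_mul]
    · intro k _ hk
      rw [mul_assoc, Matrix.single_mul_single_of_ne _ _ _ _ hk, mul_zero]
    · intro hmem; exact absurd (Finset.mem_univ i) hmem
  have h2 : Matrix.single i i (1:R) * (∑ k, σ (Matrix.single k k (1:R)) * Matrix.single k k (1:R))
      = -(Matrix.single i i (1:R) * σ (Matrix.single i i (1:R))) := by
    ext a b
    by_cases ha : a = i
    · subst ha
      rw [Matrix.neg_apply, Matrix.single_mul_apply_same,
        Matrix.single_mul_apply_same, hs_entry σ hτ a b]
      ring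
    · rw [Matrix.neg_apply, Matrix.single_mul_apply_of_ne _ _ _ _ _ ha,
        Matrix.single_mul_apply_of_ne _ _ _ _ _ ha, neg_zero]
  rw [h1, h2, sub_neg_eq_add]
  have h3 := hτ (Matrix.single i i (1:R))
  rw [Matrix.single_mul_single_same, one_mul] at h3
  rw [← h3, sub_self]

end Stmt7Aux

/-- Every generalized Jordan derivation of the full matrix algebra `Mₙ(R)` over a
2-torsion free commutative ring `R` with identity is a generalized derivation. -/
theorem stmt_7 {R : Type*} [CommRing R]
    (h2 : ∀ x : R, x + x = 0 → x = 0)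
    (n : ℕ) (hn : 1 ≤ n)
    (Ξ τ : Matrix (Fin n) (Fin n) R →ₗ[R] Matrix (Fin n) (Fin n) R)
    (hτ : ∀ a, τ (a * a) = τ a * a + a * τ a)
    (hΞ : ∀ a, Ξ (a * a) = Ξ a * a + a * τ a) :
    ∃ d : Matrix (Fin n) (Fin n) R →ₗ[R] Matrix (Fin n) (Fin n) R,
      (∀ a b, d (a * b) = d a * b + a * d b) ∧
      (∀ a b, Ξ (a * b) = Ξ a * b + a * d b) := by
  classical
  open Matrix in
  -- 2-torsion freeness for matrices
  have h2m : ∀ M : Matrix (Fin n) (Fin n) R, M + M = 0 → M = 0 := by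
    intro M hM
    ext a b
    exact h2 _ (by have := congrFun (congrFun hM a) b; simpa using this)
  -- the inner-derivation correction
  set s : Matrix (Fin n) (Fin n) R :=
    ∑ k, τ (Matrix.single k k (1:R)) * Matrix.single k k (1:R) with hs
  set σ : Matrix (Fin n) (Fin n) R →ₗ[R] Matrix (Fin n) (Fin n) R :=
    τ - (LinearMap.mulLeft R s - LinearMap.mulRight R s) with hσdef
  have hσx : ∀ x, σ x = τ x - (s * x - x * s) := by
    intro x
    rw [hσdef]
    simp [LinearMap.sub_apply, LinearMap.mulLeft_apply, LinearMap.mulRight_apply]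
  have hσJ : ∀ a, σ (a * a) = σ a * a + a * σ a := by
    intro a
    rw [hσx, hσx, hτ a]
    noncomm_ring
  have hEσ : ∀ k : Fin n, σ (Matrix.single k k (1:R)) = 0 := by
    intro k
    rw [hσx, hs]
    exact Stmt7Aux.sigmaE τ hτ k
  have hP3σ := Stmt7Aux.myP3 σ h2m hσJ
  have hP3'σ := Stmt7Aux.myP3' σ h2m hσJ
  have hσder : ∀ a b, σ (a * b) = σ a * b + a * σ b :=
    Stmt7Aux.jder σ hP3σ hP3'σ hEσ
  have hτx : ∀ x, τ x = σ x + (s * x - x * s) := by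
    intro x; rw [hσx]; abel
  have hτder : ∀ a b, τ (a * b) = τ a * b + a * τ b := by
    intro a b
    rw [hτx (a * b), hσder a b, hτx a, hτx b]
    noncomm_ring
  -- now handle Ξ
  have hτ1 : τ (1 : Matrix (Fin n) (Fin n) R) = 0 := by
    have h := hτ 1
    simp only [one_mul, mul_one] at h
    have : τ (1 : Matrix (Fin n) (Fin n) R) + τ 1 = τ 1 + 0 := by rw [add_zero, ← h]
    exact (add_left_cancel this)
  have hΞb : ∀ b, Ξ b = Ξ 1 * b + τ b := by
    intro b
    have h := hΞ (1 + b)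
    have e : ((1 : Matrix (Fin n) (Fin n) R) + b) * (1 + b) = 1 * 1 + (b + b) + b * b := by
      noncomm_ring
    rw [e, map_add, map_add, map_add, hΞ 1, hΞ b, map_add, map_add, hτ1, one_mul, mul_one] at h
    -- h : Ξ 1 + 0 + (Ξ b + Ξ b) + (Ξ b * b + b * τ b) = (Ξ 1 + Ξ b) * (1 + b) + (1 + b) * (0 + τ b)
    have hM : Ξ b = (Ξ 1 + Ξ b) * (1 + b) + (1 + b) * (0 + τ b)
        - (Ξ 1 + 0) - Ξ b - (Ξ b * b + b * τ b) := by
      rw [← h]; abel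
    rw [hM]; noncomm_ring
  refine ⟨τ, hτder, fun a b => ?_⟩
  rw [hΞb (a * b), hΞb a, hτder a b]
  noncomm_ring
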